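/- Let n be a positive integer and let G be a connected graph with at most 4n−2 edges such that G → (nK₂, C₃). Suppose that for every positive integer k, every connected graph G′ with either fewer vertices than G, or the same number of vertices and fewer edges than G, satisfies G′ ↛ (kK₂, C₃) whenever G′ has at most 4k−2 edges. Then every edge of G is contained in at least one triangle of G. -/

import Mathlib

open SimpleGraph

/-- `G` contains a copy of `H`, i.e. there is an injective graph homomorphism from `H` to `G`. -/
def ContainsCopy {V W : Type*} (G : SimpleGraph V) (H : SimpleGraph W) : Prop :=
  ∃ f : H →g G, Function.Injective f

/-- `G` arrows `(G₁, G₂)`: for every red/blue colouring of the edges of `G`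
(given by a subgraph `R ≤ G` of red edges, the blue edges being `G \ R`),
there is a red copy of `G₁` or a blue copy of `G₂`. -/
def Arrows {V V₁ V₂ : Type*} (G : SimpleGraph V) (G₁ : SimpleGraph V₁) (G₂ : SimpleGraph V₂) :
    Prop :=
  ∀ R : SimpleGraph V, R ≤ G → ContainsCopy R G₁ ∨ ContainsCopy (G \ R) G₂

/-- The matching `nK₂` with `n` edges. -/
def Matching (n : ℕ) : SimpleGraph (Fin n × Fin 2) where
  Adj a b := a.1 = b.1 ∧ a.2 ≠ b.2
  symm := by constructor; intro a b h; exact ⟨h.1.symm, h.2.symm⟩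
  loopless := by constructor; intro a h; exact h.2 rfl

/-- `n` disjoint copies of the graph `H`. -/
def Copies (n : ℕ) {W : Type*} (H : SimpleGraph W) : SimpleGraph (Fin n × W) where
  Adj a b := a.1 = b.1 ∧ H.Adj a.2 b.2
  symm := by constructor; intro a b h; exact ⟨h.1.symm, h.2.symm⟩
  loopless := by constructor; intro a h; exact absurd h.2 H.irrefl

/-- Disjoint union of two graphs. -/
def DisjUnion {V W : Type*} (G : SimpleGraph V) (H : SimpleGraph W) : SimpleGraph (V ⊕ W) where
  Adj a b :=
    match a, b with
    | Sum.inl x, Sum.inl y => G.Adj x y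
    | Sum.inr x, Sum.inr y => H.Adj x y
    | _, _ => False
  symm := by
    constructor
    rintro (x | x) (y | y) h
    · exact G.adj_symm h
    · exact h.elim
    · exact h.elim
    · exact H.adj_symm h
  loopless := by
    constructor
    rintro (x | x) h
    · exact absurd h G.irrefl
    · exact absurd h H.irrefl

-- helper 1
lemma containsCopy_matching_zero {V : Type*} (K : SimpleGraph V) : ContainsCopy K (Matching 0) := by
  refine ⟨⟨fun x => x.1.elim0, ?_⟩, ?_⟩
  · intro a b h; exact a.1.elim0
  · intro a; exact a.1.elim0

-- helper 2
lemma matching_card_le {V : Type*} [Finite V] (K : SimpleGraph V) (k : ℕ)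
    (h : ContainsCopy K (Matching k)) : 2 * k ≤ Nat.card V := by
  obtain ⟨f, hf⟩ := h
  have := Nat.card_le_card_of_injective _ hf
  simpa [Nat.card_eq_fintype_card, mul_comm] using this

lemma cycle3_adj01 : (cycleGraph 3).Adj 0 1 := by decide
lemma cycle3_adj12 : (cycleGraph 3).Adj 1 2 := by decide
lemma cycle3_adj02 : (cycleGraph 3).Adj 0 2 := by decide

-- helper 3
lemma not_arrows_of_large {V : Type*} [Finite V] (K : SimpleGraph V) (k : ℕ)
    (h : Nat.card V < 2 * k) : ¬ Arrows K (Matching k) (cycleGraph 3) := by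
  intro har
  rcases har K le_rfl with hred | hblue
  · exact absurd (matching_card_le K k hred) (by omega)
  · obtain ⟨f, hf⟩ := hblue
    have := f.map_rel cycle3_adj01
    simp at this

-- helper 4
lemma containsCopy_triangle_iff {V : Type*} (K : SimpleGraph V) :
    ContainsCopy K (cycleGraph 3) ↔ ∃ x y z : V, K.Adj x y ∧ K.Adj y z ∧ K.Adj x z := by
  constructor
  · rintro ⟨f, hf⟩
    exact ⟨f 0, f 1, f 2, f.map_rel cycle3_adj01, f.map_rel cycle3_adj12, f.map_rel cycle3_adj02⟩
  · rintro ⟨x, y, z, hxy, hyz, hxz⟩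
    refine ⟨⟨fun i => ![x, y, z] i, ?_⟩, ?_⟩
    · intro a b hab
      fin_cases a <;> fin_cases b <;>
        first
          | exact absurd hab (by decide)
          | simpa using hxy
          | simpa using hxy.symm
          | simpa using hyz
          | simpa using hyz.symm
          | simpa using hxz
          | simpa using hxz.symm
    · have h1 : x ≠ y := hxy.ne
      have h2 : y ≠ z := hyz.ne
      have h3 : x ≠ z := hxz.ne
      have hinj : Function.Injective (fun i : Fin 3 => ![x, y, z] i) := by
        intro a b hab
        fin_cases a <;> fin_cases b <;> simp_all
      exact hinj

-- helper 5
lemma reach_induce_supp {V : Type*} (G : SimpleGraph V) (c : G.ConnectedComponent) :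
    ∀ {x y : V} (_ : G.Walk x y) (hx : x ∈ c.supp) (hy : y ∈ c.supp),
      (G.induce c.supp).Reachable ⟨x, hx⟩ ⟨y, hy⟩ := by
  intro x y p
  induction p with
  | nil =>
    intro hx hy
    exact Reachable.refl _
  | @cons u b y h q ih =>
    intro hx hy
    have hb : b ∈ c.supp := by
      rw [ConnectedComponent.mem_supp_iff] at hx ⊢
      rw [← hx]
      exact (ConnectedComponent.connectedComponentMk_eq_of_adj h).symm
    have hadj : (G.induce c.supp).Adj ⟨u, hx⟩ ⟨b, hb⟩ := h
    exact hadj.reachable.trans (ih hb hy)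

lemma induce_supp_connected {V : Type*} (G : SimpleGraph V) (c : G.ConnectedComponent) :
    (G.induce c.supp).Connected := by
  obtain ⟨v, rfl⟩ := c.exists_rep
  rw [connected_iff_exists_forall_reachable]
  refine ⟨⟨v, rfl⟩, ?_⟩
  rintro ⟨x, hx⟩
  have hr : G.Reachable v x := ConnectedComponent.exact (hx.symm : _)
  obtain ⟨p⟩ := hr
  exact reach_induce_supp G _ p rfl hx

-- helper 6
lemma matching_copy_subtype {V : Type*} {S : Set V} (RA : SimpleGraph ↥S) {n m : ℕ}
    (F : Fin n × Fin 2 → V) (hinj : Function.Injective F)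
    (I : Finset (Fin n)) (hm : m ≤ I.card)
    (hS : ∀ i ∈ I, ∀ t : Fin 2, F (i, t) ∈ S)
    (hadj : ∀ i ∈ I, ∀ (t t' : Fin 2), t ≠ t' → ∀ (h : F (i, t) ∈ S) (h' : F (i, t') ∈ S),
      RA.Adj ⟨F (i, t), h⟩ ⟨F (i, t'), h'⟩) :
    ContainsCopy RA (Matching m) := by
  classical
  let g : Fin m → {x // x ∈ I} := fun j => I.equivFin.symm (Fin.castLE hm j)
  have hg : Function.Injective g := by
    intro j j' h
    have := I.equivFin.symm.injective h
    exact Fin.castLE_injective hm this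
  refine ⟨⟨fun p => ⟨F ((g p.1).1, p.2), hS _ (g p.1).2 _⟩, ?_⟩, ?_⟩
  · rintro ⟨j, t⟩ ⟨j', t'⟩ ⟨h1, h2⟩
    simp only at h1 h2
    subst h1
    exact hadj _ (g j).2 t t' h2 _ _
  · rintro ⟨j, t⟩ ⟨j', t'⟩ h
    have h' : F ((g j).1, t) = F ((g j').1, t') := congrArg Subtype.val h
    have := hinj h'
    have ht : t = t' := (Prod.ext_iff.mp this).2
    have hj : (g j).1 = (g j').1 := (Prod.ext_iff.mp this).1
    have : g j = g j' := Subtype.ext hj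
    have := hg this
    subst this; subst ht; rfl

/-- Under the minimality hypotheses, every edge of `G` is contained in at
least one triangle. -/
theorem every_edge_in_triangle (n : ℕ) (hn : 0 < n) (V : Type) [Finite V]
    (G : SimpleGraph V) (hconn : G.Connected) (hE : G.edgeSet.ncard ≤ 4 * n - 2)
    (harrow : Arrows G (Matching n) (cycleGraph 3))
    (hmin : ∀ k : ℕ, 0 < k → ∀ (W : Type), Finite W → ∀ H : SimpleGraph W,
      H.Connected →
      (Nat.card W < Nat.card V ∨
        (Nat.card W = Nat.card V ∧ H.edgeSet.ncard < G.edgeSet.ncard)) →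
      H.edgeSet.ncard ≤ 4 * k - 2 →
      ¬ Arrows H (Matching k) (cycleGraph 3)) :
    ∀ v w : V, G.Adj v w → ∃ u : V, G.Adj v u ∧ G.Adj w u := by
  classical
  intro v w hvw
  by_contra hno
  push_neg at hno
  set G' : SimpleGraph V := G.deleteEdges {s(v, w)} with hG'def
  have hG'le : G' ≤ G := G.deleteEdges_le _
  have hG'adj : ∀ x y : V, G'.Adj x y ↔ G.Adj x y ∧ s(x, y) ≠ s(v, w) := by
    intro x y; rw [hG'def, deleteEdges_adj]; simp
  -- no triangle contains the edge vw
  have htri : ∀ x y z : V, G.Adj x y → G.Adj y z → G.Adj x z → s(x, y) ≠ s(v, w) := by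
    intro x y z hxy hyz hxz hxy_e
    rw [Sym2.eq_iff] at hxy_e
    rcases hxy_e with ⟨rfl, rfl⟩ | ⟨rfl, rfl⟩
    · exact hno z hxz hyz
    · exact hno z hyz hxz
  -- blue triangles live in G'
  have hblue : ∀ R : SimpleGraph V, ContainsCopy (G \ R) (cycleGraph 3) →
      ∃ x y z : V, G'.Adj x y ∧ G'.Adj y z ∧ G'.Adj x z ∧
        ¬R.Adj x y ∧ ¬R.Adj y z ∧ ¬R.Adj x z := by
    intro R hc
    rw [containsCopy_triangle_iff] at hc
    obtain ⟨x, y, z, h1, h2, h3⟩ := hc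
    rw [sdiff_adj] at h1 h2 h3
    refine ⟨x, y, z, ?_, ?_, ?_, h1.2, h2.2, h3.2⟩
    · exact (hG'adj x y).2 ⟨h1.1, htri x y z h1.1 h2.1 h3.1⟩
    · exact (hG'adj y z).2 ⟨h2.1, htri y z x h2.1 h3.1.symm h1.1.symm⟩
    · exact (hG'adj x z).2 ⟨h3.1, htri x z y h3.1 h2.1.symm h1.1⟩
  have hev : s(v, w) ∈ G.edgeSet := hvw
  have hGfin : G.edgeSet.Finite := Set.toFinite _
  have hEG' : G'.edgeSet = G.edgeSet \ {s(v, w)} := by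
    rw [hG'def, edgeSet_deleteEdges]
  have hEG'card : G'.edgeSet.ncard + 1 = G.edgeSet.ncard := by
    rw [hEG']
    exact Set.ncard_diff_singleton_add_one hev hGfin
  by_cases hGc : G'.Connected
  · -- connected case
    have harrow' : Arrows G' (Matching n) (cycleGraph 3) := by
      intro R hR
      rcases harrow R (hR.trans hG'le) with hred | hblue' 
      · exact Or.inl hred
      · right
        obtain ⟨x, y, z, g1, g2, g3, n1, n2, n3⟩ := hblue R hblue'
        rw [containsCopy_triangle_iff]
        exact ⟨x, y, z, by rw [sdiff_adj]; exact ⟨g1, n1⟩,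
          by rw [sdiff_adj]; exact ⟨g2, n2⟩, by rw [sdiff_adj]; exact ⟨g3, n3⟩⟩
    refine hmin n hn V ‹Finite V› G' hGc (Or.inr ⟨rfl, by omega⟩) (by omega) harrow'
  · -- disconnected case
    set S : Set V := (G'.connectedComponentMk v).supp with hSdef
    set T : Set V := (G'.connectedComponentMk w).supp with hTdef
    have hvS : v ∈ S := rfl
    have hwT : w ∈ T := rfl
    have hmemS : ∀ x : V, x ∈ S ↔ G'.connectedComponentMk x = G'.connectedComponentMk v := by
      intro x; rw [hSdef]; exact ConnectedComponent.mem_supp_iff _ _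
    have hmemT : ∀ x : V, x ∈ T ↔ G'.connectedComponentMk x = G'.connectedComponentMk w := by
      intro x; rw [hTdef]; exact ConnectedComponent.mem_supp_iff _ _
    -- S ∪ T is everything
    have hclosed : ∀ x y : V, x ∈ S ∪ T → G.Adj x y → y ∈ S ∪ T := by
      intro x y hx hxy
      by_cases hxy_e : s(x, y) = s(v, w)
      · rw [Sym2.eq_iff] at hxy_e
        rcases hxy_e with ⟨rfl, rfl⟩ | ⟨rfl, rfl⟩
        · exact Or.inr hwT
        · exact Or.inl hvS
      · have hxy' : G'.Adj x y := (hG'adj x y).2 ⟨hxy, hxy_e⟩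
        have hcomp : G'.connectedComponentMk y = G'.connectedComponentMk x :=
          (ConnectedComponent.connectedComponentMk_eq_of_adj hxy').symm
        rcases hx with hx | hx
        · exact Or.inl ((hmemS y).2 (hcomp.trans ((hmemS x).1 hx)))
        · exact Or.inr ((hmemT y).2 (hcomp.trans ((hmemT x).1 hx)))
    have huniv : ∀ u : V, u ∈ S ∪ T := by
      have key : ∀ (x u : V) (_ : G.Walk x u), x ∈ S ∪ T → u ∈ S ∪ T := by
        intro x u p
        induction p with
        | nil => exact fun h => h
        | cons h q ih => exact fun hx => ih (hclosed _ _ hx h)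
      intro u
      obtain ⟨p⟩ := hconn.preconnected v u
      exact key v u p (Or.inl hvS)
    have hwS : w ∉ S := by
      intro hwS'
      apply hGc
      have hvw' : G'.connectedComponentMk w = G'.connectedComponentMk v := (hmemS w).1 hwS'
      have hallS : ∀ u : V, u ∈ S := by
        intro u
        rcases huniv u with h | h
        · exact h
        · exact (hmemS u).2 (((hmemT u).1 h).trans hvw')
      haveI : Nonempty V := ⟨v⟩
      refine ⟨fun x y => ?_⟩
      exact ConnectedComponent.exact (((hmemS x).1 (hallS x)).trans ((hmemS y).1 (hallS y)).symm)
    have hvT : v ∉ T := by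
      intro hvT'
      exact hwS ((hmemS w).2 (((hmemT v).1 hvT').symm : _))
    have hSTdisj : ∀ x : V, x ∈ S → x ∈ T → False := by
      intro x hxS hxT
      exact hwS ((hmemS w).2 ((((hmemT x).1 hxT).symm).trans ((hmemS x).1 hxS)))
    -- the two induced component graphs
    have hAconn : (G'.induce S).Connected := by rw [hSdef]; exact induce_supp_connected G' _
    have hBconn : (G'.induce T).Connected := by rw [hTdef]; exact induce_supp_connected G' _
    have hAadj : ∀ (x y : ↥S), (G'.induce S).Adj x y ↔ G'.Adj x.1 y.1 := by
      intro x y; exact Iff.rfl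
    have hBadj : ∀ (x y : ↥T), (G'.induce T).Adj x y ↔ G'.Adj x.1 y.1 := by
      intro x y; exact Iff.rfl
    -- maximal matching-arrow numbers for each component
    set PA : ℕ → Prop := fun k => Arrows (G'.induce S) (Matching k) (cycleGraph 3) with hPAdef
    set PB : ℕ → Prop := fun k => Arrows (G'.induce T) (Matching k) (cycleGraph 3) with hPBdef
    set N : ℕ := Nat.card V with hNdef
    set a : ℕ := Nat.findGreatest PA N with hadef
    set b : ℕ := Nat.findGreatest PB N with hbdef
    have hPA0 : PA 0 := fun R _ => Or.inl (containsCopy_matching_zero R)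
    have hPB0 : PB 0 := fun R _ => Or.inl (containsCopy_matching_zero R)
    have haP : PA a := Nat.findGreatest_spec (Nat.zero_le N) hPA0
    have hbP : PB b := Nat.findGreatest_spec (Nat.zero_le N) hPB0
    have hcardS : Nat.card ↥S ≤ N := by
      rw [hNdef]; exact Nat.card_le_card_of_injective _ Subtype.val_injective
    have hcardT : Nat.card ↥T ≤ N := by
      rw [hNdef]; exact Nat.card_le_card_of_injective _ Subtype.val_injective
    have hnotA : ∀ k, a < k → ¬ PA k := by
      intro k hk
      by_cases hkN : k ≤ N
      · exact Nat.findGreatest_is_greatest hk hkN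
      · rw [hPAdef]; exact not_arrows_of_large _ k (by omega)
    have hnotB : ∀ k, b < k → ¬ PB k := by
      intro k hk
      by_cases hkN : k ≤ N
      · exact Nat.findGreatest_is_greatest hk hkN
      · rw [hPBdef]; exact not_arrows_of_large _ k (by omega)
    -- key claim : n ≤ a + b
    have hab : n ≤ a + b := by
      by_contra hab
      push_neg at hab
      have hA1 := hnotA (a + 1) (Nat.lt_succ_self a)
      have hB1 := hnotB (b + 1) (Nat.lt_succ_self b)
      rw [hPAdef] at hA1
      rw [hPBdef] at hB1
      simp only [Arrows, not_forall, not_or] at hA1 hB1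
      obtain ⟨RA, hRAle, hRAred, hRAblue⟩ := hA1
      obtain ⟨RB, hRBle, hRBred, hRBblue⟩ := hB1
      -- combined red graph on V
      set R : SimpleGraph V := {
        Adj := fun x y => (∃ hx : x ∈ S, ∃ hy : y ∈ S, RA.Adj ⟨x, hx⟩ ⟨y, hy⟩) ∨
          (∃ hx : x ∈ T, ∃ hy : y ∈ T, RB.Adj ⟨x, hx⟩ ⟨y, hy⟩)
        symm := by
          constructor; rintro x y (⟨hx, hy, h⟩ | ⟨hx, hy, h⟩)
          · exact Or.inl ⟨hy, hx, h.symm⟩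
          · exact Or.inr ⟨hy, hx, h.symm⟩
        loopless := by
          constructor; rintro x (⟨hx, hy, h⟩ | ⟨hx, hy, h⟩)
          · exact RA.loopless.irrefl _ h
          · exact RB.loopless.irrefl _ h } with hRdef
      have hRadj : ∀ x y : V, R.Adj x y ↔
          ((∃ hx : x ∈ S, ∃ hy : y ∈ S, RA.Adj ⟨x, hx⟩ ⟨y, hy⟩) ∨
          (∃ hx : x ∈ T, ∃ hy : y ∈ T, RB.Adj ⟨x, hx⟩ ⟨y, hy⟩)) := fun x y => Iff.rfl
      have hRle : R ≤ G := by
        rintro x y (⟨hx, hy, h⟩ | ⟨hx, hy, h⟩)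
        · exact hG'le ((hAadj _ _).1 (hRAle h))
        · exact hG'le ((hBadj _ _).1 (hRBle h))
      rcases harrow R hRle with hred | hblue'
      · -- red case: a matching of size n splits over S and T
        obtain ⟨f, hf⟩ := hred
        have hadjR : ∀ i : Fin n, ∀ t t' : Fin 2, t ≠ t' → R.Adj (f (i, t)) (f (i, t')) := by
          intro i t t' htt
          exact f.map_rel ⟨rfl, htt⟩
        set I : Finset (Fin n) := Finset.univ.filter (fun i => (f (i, 0) : V) ∈ S) with hIdef
        have hclassS : ∀ i ∈ I, ∀ t : Fin 2, (f (i, t) : V) ∈ S := by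
          intro i hi t
          rw [hIdef, Finset.mem_filter] at hi
          by_cases ht0 : t = 0
          · subst ht0; exact hi.2
          · rcases hadjR i 0 t (Ne.symm ht0) with ⟨h0, ht, _⟩ | ⟨h0, ht, _⟩
            · exact ht
            · exact absurd h0 (fun h0 => hSTdisj _ hi.2 h0)
        have hadjRA : ∀ i ∈ I, ∀ (t t' : Fin 2), t ≠ t' →
            ∀ (h : (f (i, t) : V) ∈ S) (h' : (f (i, t') : V) ∈ S),
            RA.Adj ⟨f (i, t), h⟩ ⟨f (i, t'), h'⟩ := by
          intro i hi t t' htt h h'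
          rcases hadjR i t t' htt with ⟨hx, hy, hadj⟩ | ⟨hx, hy, hadj⟩
          · exact hadj
          · exact absurd hx (fun hx => hSTdisj _ h hx)
        have hclassT : ∀ i ∈ Iᶜ, ∀ t : Fin 2, (f (i, t) : V) ∈ T := by
          intro i hi t
          rw [Finset.mem_compl, hIdef, Finset.mem_filter] at hi
          have hi' : (f (i, 0) : V) ∉ S := fun h => hi ⟨Finset.mem_univ i, h⟩
          have hmem : (f (i, 0) : V) ∈ T ∧ (f (i, 1) : V) ∈ T := by
            rcases hadjR i 0 1 (by decide) with ⟨h0, h1, _⟩ | ⟨h0, h1, _⟩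
            · exact absurd h0 hi'
            · exact ⟨h0, h1⟩
          fin_cases t
          · exact hmem.1
          · exact hmem.2
        have hadjRB : ∀ i ∈ Iᶜ, ∀ (t t' : Fin 2), t ≠ t' →
            ∀ (h : (f (i, t) : V) ∈ T) (h' : (f (i, t') : V) ∈ T),
            RB.Adj ⟨f (i, t), h⟩ ⟨f (i, t'), h'⟩ := by
          intro i hi t t' htt h h'
          rcases hadjR i t t' htt with ⟨hx, hy, hadj⟩ | ⟨hx, hy, hadj⟩
          · exact absurd hx (fun hx => hSTdisj _ hx h)
          · exact hadj
        have hcards : I.card + Iᶜ.card = n := by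
          rw [Finset.card_add_card_compl]; exact Fintype.card_fin n
        rcases (by omega : a + 1 ≤ I.card ∨ b + 1 ≤ Iᶜ.card) with hc | hc
        · exact hRAred (matching_copy_subtype RA (fun p => f p) hf I hc hclassS hadjRA)
        · exact hRBred (matching_copy_subtype RB (fun p => f p) hf Iᶜ hc hclassT hadjRB)
      · -- blue case
        obtain ⟨x, y, z, g1, g2, g3, n1, n2, n3⟩ := hblue R hblue'
        rcases huniv x with hxS | hxT
        · have hyS : y ∈ S := (hmemS y).2
            (((ConnectedComponent.connectedComponentMk_eq_of_adj g1).symm).trans ((hmemS x).1 hxS))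
          have hzS : z ∈ S := (hmemS z).2
            (((ConnectedComponent.connectedComponentMk_eq_of_adj g3).symm).trans ((hmemS x).1 hxS))
          apply hRAblue
          rw [containsCopy_triangle_iff]
          refine ⟨⟨x, hxS⟩, ⟨y, hyS⟩, ⟨z, hzS⟩, ?_, ?_, ?_⟩
          · rw [sdiff_adj]
            exact ⟨(hAadj _ _).2 g1, fun hR => n1 ((hRadj x y).2 (Or.inl ⟨hxS, hyS, hR⟩))⟩
          · rw [sdiff_adj]
            exact ⟨(hAadj _ _).2 g2, fun hR => n2 ((hRadj y z).2 (Or.inl ⟨hyS, hzS, hR⟩))⟩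
          · rw [sdiff_adj]
            exact ⟨(hAadj _ _).2 g3, fun hR => n3 ((hRadj x z).2 (Or.inl ⟨hxS, hzS, hR⟩))⟩
        · have hyT : y ∈ T := (hmemT y).2
            (((ConnectedComponent.connectedComponentMk_eq_of_adj g1).symm).trans ((hmemT x).1 hxT))
          have hzT : z ∈ T := (hmemT z).2
            (((ConnectedComponent.connectedComponentMk_eq_of_adj g3).symm).trans ((hmemT x).1 hxT))
          apply hRBblue
          rw [containsCopy_triangle_iff]
          refine ⟨⟨x, hxT⟩, ⟨y, hyT⟩, ⟨z, hzT⟩, ?_, ?_, ?_⟩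
          · rw [sdiff_adj]
            exact ⟨(hBadj _ _).2 g1, fun hR => n1 ((hRadj x y).2 (Or.inr ⟨hxT, hyT, hR⟩))⟩
          · rw [sdiff_adj]
            exact ⟨(hBadj _ _).2 g2, fun hR => n2 ((hRadj y z).2 (Or.inr ⟨hyT, hzT, hR⟩))⟩
          · rw [sdiff_adj]
            exact ⟨(hBadj _ _).2 g3, fun hR => n3 ((hRadj x z).2 (Or.inr ⟨hxT, hzT, hR⟩))⟩
    -- edge counting
    have hmapinjS : Function.Injective (Sym2.map (Subtype.val : ↥S → V)) :=
      Sym2.map.injective Subtype.val_injective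
    have hmapinjT : Function.Injective (Sym2.map (Subtype.val : ↥T → V)) :=
      Sym2.map.injective Subtype.val_injective
    have hsubS : Sym2.map (Subtype.val : ↥S → V) '' (G'.induce S).edgeSet ⊆ G'.edgeSet := by
      rintro x ⟨y, hy, rfl⟩
      induction y using Sym2.ind with
      | _ p q =>
        rw [mem_edgeSet] at hy
        rw [Sym2.map_pair_eq, mem_edgeSet]
        exact (hAadj p q).1 hy
    have hsubT : Sym2.map (Subtype.val : ↥T → V) '' (G'.induce T).edgeSet ⊆ G'.edgeSet := by
      rintro x ⟨y, hy, rfl⟩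
      induction y using Sym2.ind with
      | _ p q =>
        rw [mem_edgeSet] at hy
        rw [Sym2.map_pair_eq, mem_edgeSet]
        exact (hBadj p q).1 hy
    have hdisj : Disjoint (Sym2.map (Subtype.val : ↥S → V) '' (G'.induce S).edgeSet)
        (Sym2.map (Subtype.val : ↥T → V) '' (G'.induce T).edgeSet) := by
      rw [Set.disjoint_left]
      rintro x ⟨y, hy, rfl⟩ ⟨z, hz, hzx⟩
      induction y using Sym2.ind with
      | _ p q =>
        induction z using Sym2.ind with
        | _ r t =>
          rw [Sym2.map_pair_eq, Sym2.map_pair_eq, Sym2.eq_iff] at hzx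
          rcases hzx with ⟨h1, h2⟩ | ⟨h1, h2⟩
          · exact hSTdisj _ p.2 (h1 ▸ r.2)
          · exact hSTdisj _ q.2 (h1 ▸ r.2)
    have hEsum : (G'.induce S).edgeSet.ncard + (G'.induce T).edgeSet.ncard ≤
        G'.edgeSet.ncard := by
      have h1 : ((Sym2.map (Subtype.val : ↥S → V) '' (G'.induce S).edgeSet) ∪
          (Sym2.map (Subtype.val : ↥T → V) '' (G'.induce T).edgeSet)).ncard ≤
          G'.edgeSet.ncard :=
        Set.ncard_le_ncard (Set.union_subset hsubS hsubT) (Set.toFinite _)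
      rwa [Set.ncard_union_eq hdisj (Set.toFinite _) (Set.toFinite _),
        Set.ncard_image_of_injective _ hmapinjS, Set.ncard_image_of_injective _ hmapinjT] at h1
    have hSlt : Nat.card ↥S < Nat.card V := by
      rw [Nat.card_coe_set_eq, ← Set.ncard_univ]
      exact Set.ncard_lt_ncard
        (Set.ssubset_univ_iff.mpr (fun h => hwS (by rw [h]; exact Set.mem_univ w)))
        Set.finite_univ
    have hTlt : Nat.card ↥T < Nat.card V := by
      rw [Nat.card_coe_set_eq, ← Set.ncard_univ]
      exact Set.ncard_lt_ncard
        (Set.ssubset_univ_iff.mpr (fun h => hvT (by rw [h]; exact Set.mem_univ v)))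
        Set.finite_univ
    -- conclude via minimality
    by_cases hsideA : 1 ≤ a ∧ (G'.induce S).edgeSet.ncard + 2 ≤ 4 * a
    · exact hmin a hsideA.1 ↥S inferInstance (G'.induce S) hAconn (Or.inl hSlt) (by omega)
        (by rw [hPAdef] at haP; exact haP)
    · by_cases hsideB : 1 ≤ b ∧ (G'.induce T).edgeSet.ncard + 2 ≤ 4 * b
      · exact hmin b hsideB.1 ↥T inferInstance (G'.induce T) hBconn (Or.inl hTlt) (by omega)
          (by rw [hPBdef] at hbP; exact hbP)
      · omega
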